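/- Let G be a Garside group, r a natural number, p, q ∈ ℤ^r, and a, c ∈ [p,q]. For v ∈ [p,q], let S_right(v) denote the set of ≼-minimal elements of {s ∈ S : s ≠ 1 and v^s ∈ [p,q]}, and let S_left(v) denote the set of ≽-minimal elements of {s ∈ S : s ≠ 1 and v^{s⁻¹} ∈ [p,q]}. Then the following are equivalent: (1) a and c are conjugate in G; (2) there exist l ∈ ℕ and tuples w₀ = c, w₁, …, w_l = a in [p,q] such that for each i < l, w_{i+1} = w_i^{s} for some s ∈ S_right(w_i); (3) there exist l ∈ ℕ and tuples w₀ = a, w₁, …, w_l = c in [p,q] such that for each i < l, w_{i+1} = w_i^{s⁻¹} for some s ∈ S_left(w_i). -/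

import Mathlib

/-- A Garside structure on a group `G`: a submonoid `G⁺` of positive elements
together with a Garside element `Δ`, satisfying the Garside axioms. -/
structure GarsideStructure (G : Type*) [Group G] where
  /-- the monoid `G⁺` of positive elements -/
  pos : Submonoid G
  /-- the Garside element `Δ` -/
  Δ : G
  delta_mem : Δ ∈ pos
  /-- `G⁺` is Noetherian -/
  noetherian : ∀ a ∈ pos, ∃ n : ℕ, ∀ l : List G,
    (∀ x ∈ l, x ∈ pos ∧ x ≠ 1) → l.prod = a → l.length ≤ n
  /-- any two elements of `G⁺` admit a least common right multiple (w.r.t. `≼`) -/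
  lcm_right : ∀ a ∈ pos, ∀ b ∈ pos, ∃ m ∈ pos,
    a⁻¹ * m ∈ pos ∧ b⁻¹ * m ∈ pos ∧
      ∀ c ∈ pos, a⁻¹ * c ∈ pos → b⁻¹ * c ∈ pos → m⁻¹ * c ∈ pos
  /-- any two elements of `G⁺` admit a least common left multiple (w.r.t. `≽`) -/
  lcm_left : ∀ a ∈ pos, ∀ b ∈ pos, ∃ m ∈ pos,
    m * a⁻¹ ∈ pos ∧ m * b⁻¹ ∈ pos ∧
      ∀ c ∈ pos, c * a⁻¹ ∈ pos → c * b⁻¹ ∈ pos → c * m⁻¹ ∈ pos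
  /-- `G` is the group of fractions of `G⁺` -/
  fractions : ∀ g : G, ∃ a ∈ pos, ∃ b ∈ pos, g = a⁻¹ * b
  /-- `Δ` is balanced: its left divisors in `G⁺` coincide with its right divisors -/
  balanced : ∀ s ∈ pos, (s⁻¹ * Δ ∈ pos ↔ Δ * s⁻¹ ∈ pos)
  /-- the set of simple elements (divisors of `Δ`) is finite -/
  simples_finite : {s : G | s ∈ pos ∧ s⁻¹ * Δ ∈ pos}.Finite
  /-- the simple elements generate `G⁺` -/
  simples_generate : Submonoid.closure {s : G | s ∈ pos ∧ s⁻¹ * Δ ∈ pos} = pos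

namespace GarsideStructure

variable {G : Type*} [Group G]

/-- `a ≼ b` : left divisibility. -/
def LeftDvd (Γ : GarsideStructure G) (a b : G) : Prop := a⁻¹ * b ∈ Γ.pos

/-- `b ≽ a` : right divisibility. -/
def RightDvd (Γ : GarsideStructure G) (b a : G) : Prop := b * a⁻¹ ∈ Γ.pos

/-- a simple element: a divisor of `Δ`. -/
def Simple (Γ : GarsideStructure G) (s : G) : Prop := s ∈ Γ.pos ∧ Γ.LeftDvd s Γ.Δ

/-- an atom of `G⁺`. -/
def Atom (Γ : GarsideStructure G) (a : G) : Prop :=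
  a ∈ Γ.pos ∧ a ≠ 1 ∧ ∀ b ∈ Γ.pos, ∀ c ∈ Γ.pos, a = b * c → b = 1 ∨ c = 1

/-- the iterated automorphism `τ^k`, where `τ(x) = Δ⁻¹xΔ`; so `τ^k(x) = Δ^(-k) x Δ^k`. -/
def tau (Γ : GarsideStructure G) (k : ℤ) (x : G) : G := Γ.Δ ^ (-k) * x * Γ.Δ ^ k

/-- `d` is the greatest common left divisor (`∧`) of `a` and `b`. -/
def IsLeftGcd (Γ : GarsideStructure G) (d a b : G) : Prop :=
  d ∈ Γ.pos ∧ Γ.LeftDvd d a ∧ Γ.LeftDvd d b ∧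
    ∀ c ∈ Γ.pos, Γ.LeftDvd c a → Γ.LeftDvd c b → Γ.LeftDvd c d

/-- `d` is the greatest common right divisor (`⋀̃`) of `a` and `b`. -/
def IsRightGcd (Γ : GarsideStructure G) (d a b : G) : Prop :=
  d ∈ Γ.pos ∧ Γ.RightDvd a d ∧ Γ.RightDvd b d ∧
    ∀ c ∈ Γ.pos, Γ.RightDvd a c → Γ.RightDvd b c → Γ.RightDvd d c

/-- membership of a tuple `a ∈ Gʳ` in the interval `[p,q]`:
`pᵢ ≤ inf aᵢ` (i.e. `Δ^pᵢ ≼ aᵢ`) and `sup aᵢ ≤ qᵢ` (i.e. `aᵢ ≼ Δ^qᵢ`) for all `i`. -/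
def InInterval (Γ : GarsideStructure G) {r : ℕ} (p q : Fin r → ℤ) (a : Fin r → G) : Prop :=
  ∀ i, Γ.LeftDvd (Γ.Δ ^ (p i)) (a i) ∧ Γ.LeftDvd (a i) (Γ.Δ ^ (q i))

/-- `‖a‖`: the maximal number of atoms in an expression of `a` as a product of atoms. -/
noncomputable def anorm (Γ : GarsideStructure G) (a : G) : ℕ :=
  sSup {n | ∃ l : List G, (∀ x ∈ l, Γ.Atom x) ∧ l.prod = a ∧ l.length = n}

end GarsideStructure

/-- The set of `≼`-minimal nontrivial simple elements `s` with `vˢ ∈ [p,q]`. -/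
def GarsideStructure.SRight {G : Type*} [Group G] (Γ : GarsideStructure G)
    {r : ℕ} (p q : Fin r → ℤ) (v : Fin r → G) : Set G :=
  {s | (Γ.Simple s ∧ s ≠ 1 ∧ Γ.InInterval p q (fun i => s⁻¹ * v i * s)) ∧
    ∀ t : G, (Γ.Simple t ∧ t ≠ 1 ∧ Γ.InInterval p q (fun i => t⁻¹ * v i * t)) →
      Γ.LeftDvd t s → t = s}

/-- The set of `≽`-minimal nontrivial simple elements `s` with `v^{s⁻¹} ∈ [p,q]`. -/
def GarsideStructure.SLeft {G : Type*} [Group G] (Γ : GarsideStructure G)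
    {r : ℕ} (p q : Fin r → ℤ) (v : Fin r → G) : Set G :=
  {s | (Γ.Simple s ∧ s ≠ 1 ∧ Γ.InInterval p q (fun i => s * v i * s⁻¹)) ∧
    ∀ t : G, (Γ.Simple t ∧ t ≠ 1 ∧ Γ.InInterval p q (fun i => t * v i * t⁻¹)) →
      Γ.RightDvd s t → t = s}


namespace GarsideStructure

variable {G : Type*} [Group G] (Γ : GarsideStructure G)

lemma simple_mem {s : G} (h : Γ.Simple s) : s ∈ Γ.pos := h.1

lemma tau_mem : ∀ g ∈ Γ.pos, Γ.Δ⁻¹ * g * Γ.Δ ∈ Γ.pos := by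
  have h := Γ.simples_generate
  intro g hg
  rw [← h] at hg
  induction hg using Submonoid.closure_induction with
  | mem s hs =>
      have ht : s⁻¹ * Γ.Δ ∈ Γ.pos := hs.2
      have hb := (Γ.balanced _ ht).mpr ?_
      · have e : (s⁻¹ * Γ.Δ)⁻¹ * Γ.Δ = Γ.Δ⁻¹ * s * Γ.Δ := by group
        rwa [e] at hb
      · have e : Γ.Δ * (s⁻¹ * Γ.Δ)⁻¹ = s := by group
        rw [e]; exact hs.1
  | one => simpa using Γ.pos.one_mem
  | mul x y hx hy ihx ihy =>
      have : Γ.Δ⁻¹ * (x * y) * Γ.Δ = (Γ.Δ⁻¹ * x * Γ.Δ) * (Γ.Δ⁻¹ * y * Γ.Δ) := by group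
      rw [this]; exact Γ.pos.mul_mem ihx ihy

lemma tau_inv_mem : ∀ g ∈ Γ.pos, Γ.Δ * g * Γ.Δ⁻¹ ∈ Γ.pos := by
  have h := Γ.simples_generate
  intro g hg
  rw [← h] at hg
  induction hg using Submonoid.closure_induction with
  | mem s hs =>
      have hu : Γ.Δ * s⁻¹ ∈ Γ.pos := (Γ.balanced s hs.1).mp hs.2
      have hdvd : (Γ.Δ * s⁻¹)⁻¹ * Γ.Δ ∈ Γ.pos := by
        have : (Γ.Δ * s⁻¹)⁻¹ * Γ.Δ = s := by group
        rw [this]; exact hs.1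
      have hb := (Γ.balanced _ hu).mp hdvd
      have : Γ.Δ * (Γ.Δ * s⁻¹)⁻¹ = Γ.Δ * s * Γ.Δ⁻¹ := by group
      rwa [this] at hb
  | one => simpa using Γ.pos.one_mem
  | mul x y hx hy ihx ihy =>
      have : Γ.Δ * (x * y) * Γ.Δ⁻¹ = (Γ.Δ * x * Γ.Δ⁻¹) * (Γ.Δ * y * Γ.Δ⁻¹) := by group
      rw [this]; exact Γ.pos.mul_mem ihx ihy

lemma zpow_conj_mem : ∀ (k : ℤ), ∀ g ∈ Γ.pos, Γ.Δ ^ k * g * Γ.Δ ^ (-k) ∈ Γ.pos := by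
  intro k
  induction k using Int.induction_on with
  | zero => intro g hg; simpa using hg
  | succ n ih =>
      intro g hg
      have e : Γ.Δ ^ ((n:ℤ)+1) * g * Γ.Δ ^ (-((n:ℤ)+1)) =
          Γ.Δ * (Γ.Δ ^ (n:ℤ) * g * Γ.Δ ^ (-(n:ℤ))) * Γ.Δ⁻¹ := by group
      rw [e]; exact Γ.tau_inv_mem _ (ih g hg)
  | pred n ih =>
      intro g hg
      have e : Γ.Δ ^ (-(n:ℤ)-1) * g * Γ.Δ ^ (-(-(n:ℤ)-1)) =
          Γ.Δ⁻¹ * (Γ.Δ ^ (-(n:ℤ)) * g * Γ.Δ ^ (-(-(n:ℤ)))) * Γ.Δ := by group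
      rw [e]; exact Γ.tau_mem _ (ih g hg)

lemma zpow_conj_iff (k : ℤ) (g : G) : g ∈ Γ.pos ↔ Γ.Δ ^ k * g * Γ.Δ ^ (-k) ∈ Γ.pos := by
  constructor
  · exact fun h => Γ.zpow_conj_mem k g h
  · intro h
    have := Γ.zpow_conj_mem (-k) _ h
    have e : Γ.Δ ^ (-k) * (Γ.Δ ^ k * g * Γ.Δ ^ (-k)) * Γ.Δ ^ (-(-k)) = g := by group
    rwa [e] at this

lemma leftDvd_refl (a : G) : Γ.LeftDvd a a := by
  simpa [LeftDvd] using Γ.pos.one_mem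

lemma leftDvd_trans {a b c : G} (h1 : Γ.LeftDvd a b) (h2 : Γ.LeftDvd b c) : Γ.LeftDvd a c := by
  have := Γ.pos.mul_mem h1 h2
  simpa [LeftDvd, mul_assoc] using this

lemma rightDvd_trans {a b c : G} (h1 : Γ.RightDvd a b) (h2 : Γ.RightDvd b c) : Γ.RightDvd a c := by
  have := Γ.pos.mul_mem h1 h2
  have e : a * b⁻¹ * (b * c⁻¹) = a * c⁻¹ := by group
  rwa [e] at this

/-- `Δ^k ≼ g ↔ g ≽ Δ^k`. -/
lemma zpow_leftDvd_iff_rightDvd (k : ℤ) (g : G) :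
    Γ.LeftDvd (Γ.Δ ^ k) g ↔ Γ.RightDvd g (Γ.Δ ^ k) := by
  unfold LeftDvd RightDvd
  constructor
  · intro h
    have h' := Γ.zpow_conj_mem k _ h
    have e : Γ.Δ ^ k * ((Γ.Δ ^ k)⁻¹ * g) * Γ.Δ ^ (-k) = g * (Γ.Δ ^ k)⁻¹ := by group
    rwa [e] at h'
  · intro h
    have h' := Γ.zpow_conj_mem (-k) _ h
    have e : Γ.Δ ^ (-k) * (g * (Γ.Δ ^ k)⁻¹) * Γ.Δ ^ (-(-k)) = (Γ.Δ ^ k)⁻¹ * g := by group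
    rwa [e] at h'

/-- `g ≼ Δ^k ↔ Δ^k ≽ g`. -/
lemma leftDvd_zpow_iff_rightDvd (k : ℤ) (g : G) :
    Γ.LeftDvd g (Γ.Δ ^ k) ↔ Γ.RightDvd (Γ.Δ ^ k) g := by
  unfold LeftDvd RightDvd
  constructor
  · intro h
    have h' := Γ.zpow_conj_mem k _ h
    have e : Γ.Δ ^ k * (g⁻¹ * Γ.Δ ^ k) * Γ.Δ ^ (-k) = Γ.Δ ^ k * g⁻¹ := by group
    rwa [e] at h'
  · intro h
    have h' := Γ.zpow_conj_mem (-k) _ h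
    have e : Γ.Δ ^ (-k) * (Γ.Δ ^ k * g⁻¹) * Γ.Δ ^ (-(-k)) = g⁻¹ * Γ.Δ ^ k := by group
    rwa [e] at h'

lemma eq_one_of_mem_inv_mem {u : G} (hu : u ∈ Γ.pos) (hui : u⁻¹ ∈ Γ.pos) : u = 1 := by
  by_contra hne
  obtain ⟨n, hn⟩ := Γ.noetherian u hu
  set l : List G := u :: (List.replicate n [u⁻¹, u]).flatten with hl
  have hmem : ∀ x ∈ l, x ∈ Γ.pos ∧ x ≠ 1 := by
    intro x hx
    rw [hl] at hx
    rcases List.mem_cons.mp hx with h | h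
    · exact ⟨h ▸ hu, h ▸ hne⟩
    · obtain ⟨L, hL, hxL⟩ := List.mem_flatten.mp h
      have hLe : L = [u⁻¹, u] := List.eq_of_mem_replicate hL
      rw [hLe] at hxL
      have hune : u⁻¹ ≠ 1 := by simpa using hne
      simp only [List.mem_cons, List.not_mem_nil, or_false] at hxL
      rcases hxL with h | h
      · exact ⟨h ▸ hui, h ▸ hune⟩
      · exact ⟨h ▸ hu, h ▸ hne⟩
  have haux : ∀ m : ℕ, (List.replicate m [u⁻¹, u]).flatten.prod = 1 := by
    intro m
    induction m with
    | zero => simp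
    | succ k ih => rw [List.replicate_succ]; simp [ih]
  have hprod : l.prod = u := by rw [hl]; simp [haux n]
  have hlen := hn l hmem hprod
  have : l.length = 2 * n + 1 := by
    rw [hl]
    simp [List.length_flatten, List.map_replicate]
    ring
  omega

lemma leftDvd_antisymm {a b : G} (h1 : Γ.LeftDvd a b) (h2 : Γ.LeftDvd b a) : a = b := by
  have hi : (a⁻¹ * b)⁻¹ ∈ Γ.pos := by
    have e : (a⁻¹*b)⁻¹ = b⁻¹ * a := by group
    rw [e]; exact h2
  have h := Γ.eq_one_of_mem_inv_mem h1 hi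
  exact (inv_mul_eq_one.mp h)

lemma rightDvd_antisymm {a b : G} (h1 : Γ.RightDvd a b) (h2 : Γ.RightDvd b a) : a = b := by
  have hi : (a * b⁻¹)⁻¹ ∈ Γ.pos := by
    have e : (a*b⁻¹)⁻¹ = b * a⁻¹ := by group
    rw [e]; exact h2
  have h := Γ.eq_one_of_mem_inv_mem h1 hi
  exact mul_inv_eq_one.mp h

/-- the set of lengths of factorizations of `a` into nontrivial positive elements -/
def lenSet (a : G) : Set ℕ :=
  {n | ∃ l : List G, (∀ x ∈ l, x ∈ Γ.pos ∧ x ≠ 1) ∧ l.prod = a ∧ l.length = n}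

noncomputable def nlen (a : G) : ℕ := sSup (Γ.lenSet a)

lemma lenSet_nonempty {a : G} (ha : a ∈ Γ.pos) : (Γ.lenSet a).Nonempty := by
  by_cases h : a = 1
  · exact ⟨0, [], by simp, by simp [h], rfl⟩
  · exact ⟨1, [a], by simp [ha, h], by simp, rfl⟩

lemma lenSet_bddAbove {a : G} (ha : a ∈ Γ.pos) : BddAbove (Γ.lenSet a) := by
  obtain ⟨n, hn⟩ := Γ.noetherian a ha
  exact ⟨n, fun m ⟨l, hl, hp, hlen⟩ => hlen ▸ hn l hl hp⟩

lemma nlen_mem {a : G} (ha : a ∈ Γ.pos) : Γ.nlen a ∈ Γ.lenSet a :=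
  Nat.sSup_mem (Γ.lenSet_nonempty ha) (Γ.lenSet_bddAbove ha)

lemma le_nlen {a : G} (ha : a ∈ Γ.pos) {n : ℕ} (hn : n ∈ Γ.lenSet a) : n ≤ Γ.nlen a :=
  le_csSup (Γ.lenSet_bddAbove ha) hn

lemma nlen_lt_left {a b : G} (ha : a ∈ Γ.pos) (hb : b ∈ Γ.pos) (hab : Γ.LeftDvd a b)
    (hne : a ≠ b) : Γ.nlen a < Γ.nlen b := by
  obtain ⟨l, hl, hp, hlen⟩ := Γ.nlen_mem ha
  have hmem : Γ.nlen a + 1 ∈ Γ.lenSet b := by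
    refine ⟨l ++ [a⁻¹ * b], ?_, ?_, by simp [hlen]⟩
    · intro x hx
      rcases List.mem_append.mp hx with h | h
      · exact hl x h
      · simp only [List.mem_singleton] at h
        subst h
        exact ⟨hab, fun hh => hne (inv_mul_eq_one.mp hh)⟩
    · rw [List.prod_append, hp]; simp
  have := Γ.le_nlen hb hmem
  omega

lemma nlen_lt_right {a b : G} (ha : a ∈ Γ.pos) (hb : b ∈ Γ.pos) (hab : Γ.RightDvd b a)
    (hne : a ≠ b) : Γ.nlen a < Γ.nlen b := by
  obtain ⟨l, hl, hp, hlen⟩ := Γ.nlen_mem ha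
  have hmem : Γ.nlen a + 1 ∈ Γ.lenSet b := by
    refine ⟨(b * a⁻¹) :: l, ?_, ?_, by simp [hlen]⟩
    · intro x hx
      rcases List.mem_cons.mp hx with h | h
      · subst h
        exact ⟨hab, fun hh => hne (mul_inv_eq_one.mp hh).symm⟩
      · exact hl x h
    · rw [List.prod_cons, hp]; group
  have := Γ.le_nlen hb hmem
  omega

lemma nlen_le_left {a b : G} (ha : a ∈ Γ.pos) (hb : b ∈ Γ.pos) (hab : Γ.LeftDvd a b) :
    Γ.nlen a ≤ Γ.nlen b := by
  by_cases h : a = b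
  · rw [h]
  · exact le_of_lt (Γ.nlen_lt_left ha hb hab h)

lemma nlen_le_right {a b : G} (ha : a ∈ Γ.pos) (hb : b ∈ Γ.pos) (hab : Γ.RightDvd b a) :
    Γ.nlen a ≤ Γ.nlen b := by
  by_cases h : a = b
  · rw [h]
  · exact le_of_lt (Γ.nlen_lt_right ha hb hab h)

/-- every positive element is a product of simples -/
lemma exists_simple_factorization {a : G} (ha : a ∈ Γ.pos) :
    ∃ l : List G, (∀ s ∈ l, Γ.Simple s) ∧ l.prod = a := by
  rw [← Γ.simples_generate] at ha
  induction ha using Submonoid.closure_induction with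
  | mem s hs => exact ⟨[s], by simpa [Simple, LeftDvd] using hs, by simp⟩
  | one => exact ⟨[], by simp, by simp⟩
  | mul x y hx hy ihx ihy =>
      obtain ⟨l1, h1, p1⟩ := ihx
      obtain ⟨l2, h2, p2⟩ := ihy
      refine ⟨l1 ++ l2, ?_, by simp [p1, p2]⟩
      intro s hs
      rcases List.mem_append.mp hs with h | h
      · exact h1 s h
      · exact h2 s h

lemma list_simple_left_divisor :
    ∀ l : List G, (∀ s ∈ l, Γ.Simple s) → l.prod ≠ 1 →
      ∃ s : G, Γ.Simple s ∧ s ≠ 1 ∧ Γ.LeftDvd s l.prod := by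
  intro l
  induction l with
  | nil => intro _ h; simp at h
  | cons s rest ih =>
      intro hl hne
      by_cases hs1 : s = 1
      · have hr : rest.prod ≠ 1 := by
          intro h; apply hne; simp [hs1, h]
        obtain ⟨t, ht, ht1, htd⟩ := ih (fun t ht => hl t (List.mem_cons_of_mem s ht)) hr
        refine ⟨t, ht, ht1, ?_⟩
        have e : (s :: rest).prod = rest.prod := by simp [hs1]
        rw [e]; exact htd
      · have hs := hl s List.mem_cons_self
        refine ⟨s, hs, hs1, ?_⟩
        unfold LeftDvd
        have e : s⁻¹ * (s :: rest).prod = rest.prod := by rw [List.prod_cons]; group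
        rw [e]
        exact Γ.pos.list_prod_mem (fun t ht => (hl t (List.mem_cons_of_mem s ht)).1)

lemma list_simple_right_divisor :
    ∀ l : List G, (∀ s ∈ l, Γ.Simple s) → l.prod ≠ 1 →
      ∃ s : G, Γ.Simple s ∧ s ≠ 1 ∧ Γ.RightDvd l.prod s := by
  intro l
  induction l with
  | nil => intro _ h; simp at h
  | cons s rest ih =>
      intro hl hne
      by_cases hrest : rest.prod = 1
      · have has : (s :: rest).prod = s := by simp [hrest]
        have hs := hl s List.mem_cons_self
        refine ⟨s, hs, by rw [← has]; exact hne, ?_⟩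
        unfold RightDvd
        rw [has]; simpa using Γ.pos.one_mem
      · obtain ⟨t, ht, ht1, htd⟩ := ih (fun t ht => hl t (List.mem_cons_of_mem s ht)) hrest
        refine ⟨t, ht, ht1, ?_⟩
        unfold RightDvd
        have e : (s :: rest).prod * t⁻¹ = s * (rest.prod * t⁻¹) := by rw [List.prod_cons]; group
        rw [e]
        exact Γ.pos.mul_mem (hl s List.mem_cons_self).1 htd

lemma exists_simple_left_divisor {a : G} (ha : a ∈ Γ.pos) (hne : a ≠ 1) :
    ∃ s : G, Γ.Simple s ∧ s ≠ 1 ∧ Γ.LeftDvd s a := by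
  obtain ⟨l, hl, hp⟩ := Γ.exists_simple_factorization ha
  obtain ⟨s, hs, hs1, hd⟩ := Γ.list_simple_left_divisor l hl (by rw [hp]; exact hne)
  exact ⟨s, hs, hs1, by rwa [hp] at hd⟩

lemma exists_simple_right_divisor {a : G} (ha : a ∈ Γ.pos) (hne : a ≠ 1) :
    ∃ s : G, Γ.Simple s ∧ s ≠ 1 ∧ Γ.RightDvd a s := by
  obtain ⟨l, hl, hp⟩ := Γ.exists_simple_factorization ha
  obtain ⟨s, hs, hs1, hd⟩ := Γ.list_simple_right_divisor l hl (by rw [hp]; exact hne)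
  exact ⟨s, hs, hs1, by rwa [hp] at hd⟩

lemma exists_leftGcd {a b : G} (ha : a ∈ Γ.pos) (hb : b ∈ Γ.pos) :
    ∃ d : G, Γ.IsLeftGcd d a b := by
  classical
  set D : Set G := {d | d ∈ Γ.pos ∧ Γ.LeftDvd d a ∧ Γ.LeftDvd d b} with hD
  set N : Set ℕ := Γ.nlen '' D with hN
  have hone : (1:G) ∈ D := ⟨Γ.pos.one_mem, by simpa [LeftDvd] using ha, by simpa [LeftDvd] using hb⟩
  have hNne : N.Nonempty := ⟨Γ.nlen 1, 1, hone, rfl⟩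
  have hNbdd : BddAbove N := by
    refine ⟨Γ.nlen a, ?_⟩
    rintro n ⟨d, hd, rfl⟩
    exact Γ.nlen_le_left hd.1 ha hd.2.1
  obtain ⟨d, hd, hdval⟩ := Nat.sSup_mem hNne hNbdd
  refine ⟨d, hd.1, hd.2.1, hd.2.2, ?_⟩
  intro c hc hca hcb
  obtain ⟨m, hm, hdm, hcm, hmin⟩ := Γ.lcm_right d hd.1 c hc
  have hma : Γ.LeftDvd m a := hmin a ha hd.2.1 hca
  have hmb : Γ.LeftDvd m b := hmin b hb hd.2.2 hcb
  have hmD : m ∈ D := ⟨hm, hma, hmb⟩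
  have h1 : Γ.nlen m ≤ Γ.nlen d := by
    rw [hdval]; exact le_csSup hNbdd ⟨m, hmD, rfl⟩
  have hdm' : Γ.LeftDvd d m := hdm
  have : d = m := by
    by_contra hne
    exact absurd h1 (not_le.mpr (Γ.nlen_lt_left hd.1 hm hdm' hne))
  rw [this]
  exact hcm

lemma exists_rightGcd {a b : G} (ha : a ∈ Γ.pos) (hb : b ∈ Γ.pos) :
    ∃ d : G, Γ.IsRightGcd d a b := by
  classical
  set D : Set G := {d | d ∈ Γ.pos ∧ Γ.RightDvd a d ∧ Γ.RightDvd b d} with hD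
  set N : Set ℕ := Γ.nlen '' D with hN
  have hone : (1:G) ∈ D := ⟨Γ.pos.one_mem, by simpa [RightDvd] using ha, by simpa [RightDvd] using hb⟩
  have hNne : N.Nonempty := ⟨Γ.nlen 1, 1, hone, rfl⟩
  have hNbdd : BddAbove N := by
    refine ⟨Γ.nlen a, ?_⟩
    rintro n ⟨d, hd, rfl⟩
    exact Γ.nlen_le_right hd.1 ha hd.2.1
  obtain ⟨d, hd, hdval⟩ := Nat.sSup_mem hNne hNbdd
  refine ⟨d, hd.1, hd.2.1, hd.2.2, ?_⟩
  intro c hc hca hcb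
  obtain ⟨m, hm, hdm, hcm, hmin⟩ := Γ.lcm_left d hd.1 c hc
  have hma : Γ.RightDvd a m := hmin a ha hd.2.1 hca
  have hmb : Γ.RightDvd b m := hmin b hb hd.2.2 hcb
  have hmD : m ∈ D := ⟨hm, hma, hmb⟩
  have h1 : Γ.nlen m ≤ Γ.nlen d := by
    rw [hdval]; exact le_csSup hNbdd ⟨m, hmD, rfl⟩
  have hdm' : Γ.RightDvd m d := hdm
  have : d = m := by
    by_contra hne
    exact absurd h1 (not_le.mpr (Γ.nlen_lt_right hd.1 hm hdm' hne))
  rw [this]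
  exact hcm

/-- every positive element left-divides some power of `Δ` -/
lemma exists_leftDvd_delta_pow {a : G} (ha : a ∈ Γ.pos) :
    ∃ n : ℕ, Γ.LeftDvd a (Γ.Δ ^ (n : ℤ)) := by
  rw [← Γ.simples_generate] at ha
  induction ha using Submonoid.closure_induction with
  | mem s hs =>
      refine ⟨1, ?_⟩
      unfold LeftDvd
      simpa using hs.2
  | one => exact ⟨0, by simpa [LeftDvd] using Γ.pos.one_mem⟩
  | mul x y hx hy ihx ihy =>
      obtain ⟨n, hn⟩ := ihx
      obtain ⟨m, hm⟩ := ihy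
      refine ⟨n + m, ?_⟩
      unfold LeftDvd at *
      have e : (x*y)⁻¹ * Γ.Δ ^ ((n+m : ℕ) : ℤ) =
          (y⁻¹ * Γ.Δ ^ (m:ℤ)) * (Γ.Δ ^ (-(m:ℤ)) * (x⁻¹ * Γ.Δ ^ (n:ℤ)) * Γ.Δ ^ (m:ℤ)) := by
        push_cast
        group
      rw [e]
      exact Γ.pos.mul_mem hm (by
        have := Γ.zpow_conj_mem (-(m:ℤ)) _ hn
        simpa using this)

lemma delta_zpow_mem (n : ℕ) : Γ.Δ ^ (n : ℤ) ∈ Γ.pos := by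
  rw [zpow_natCast]
  exact Γ.pos.pow_mem Γ.delta_mem n

/-- mirrored fractions: every element is `b * a⁻¹` with `a, b` positive -/
lemma fractions' (g : G) : ∃ a ∈ Γ.pos, ∃ b ∈ Γ.pos, g = b * a⁻¹ := by
  obtain ⟨α, hα, β, hβ, hg⟩ := Γ.fractions g
  obtain ⟨n, hn⟩ := Γ.exists_leftDvd_delta_pow hα
  have hδ : α⁻¹ * Γ.Δ ^ (n:ℤ) ∈ Γ.pos := hn
  have hβ' : Γ.Δ ^ (-(n:ℤ)) * β * Γ.Δ ^ (n:ℤ) ∈ Γ.pos := by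
    have := Γ.zpow_conj_mem (-(n:ℤ)) β hβ
    simpa using this
  refine ⟨Γ.Δ ^ (n:ℤ), Γ.delta_zpow_mem n,
    (α⁻¹ * Γ.Δ ^ (n:ℤ)) * (Γ.Δ ^ (-(n:ℤ)) * β * Γ.Δ ^ (n:ℤ)), Γ.pos.mul_mem hδ hβ', ?_⟩
  rw [hg]; group

lemma leftGcd_cond (w : G) {h₁ h₂ d : G} (hh₁ : h₁ ∈ Γ.pos) (hh₂ : h₂ ∈ Γ.pos)
    (hgcd : Γ.IsLeftGcd d h₁ h₂) (h1 : w * h₁ ∈ Γ.pos) (h2 : w * h₂ ∈ Γ.pos) :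
    w * d ∈ Γ.pos := by
  obtain ⟨α, hα, β, hβ, hw⟩ := Γ.fractions w
  obtain ⟨m, hm, hαm, hβm, hmin⟩ := Γ.lcm_right α hα β hβ
  have hm1 : m⁻¹ * (β * h₁) ∈ Γ.pos := by
    refine hmin (β * h₁) (Γ.pos.mul_mem hβ hh₁) ?_ ?_
    · have e : α⁻¹ * (β * h₁) = w * h₁ := by rw [hw]; group
      rw [e]; exact h1
    · have e : β⁻¹ * (β * h₁) = h₁ := by group
      rw [e]; exact hh₁
  have hm2 : m⁻¹ * (β * h₂) ∈ Γ.pos := by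
    refine hmin (β * h₂) (Γ.pos.mul_mem hβ hh₂) ?_ ?_
    · have e : α⁻¹ * (β * h₂) = w * h₂ := by rw [hw]; group
      rw [e]; exact h2
    · have e : β⁻¹ * (β * h₂) = h₂ := by group
      rw [e]; exact hh₂
  set ε := β⁻¹ * m with hε
  have hεd : Γ.LeftDvd ε d := by
    refine hgcd.2.2.2 ε hβm ?_ ?_
    · show ε⁻¹ * h₁ ∈ Γ.pos
      have e : ε⁻¹ * h₁ = m⁻¹ * (β * h₁) := by rw [hε]; group
      rw [e]; exact hm1
    · show ε⁻¹ * h₂ ∈ Γ.pos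
      have e : ε⁻¹ * h₂ = m⁻¹ * (β * h₂) := by rw [hε]; group
      rw [e]; exact hm2
  have e : w * d = (α⁻¹ * m) * (ε⁻¹ * d) := by rw [hw, hε]; group
  rw [e]
  exact Γ.pos.mul_mem hαm hεd

lemma rightGcd_cond (w : G) {h₁ h₂ d : G} (hh₁ : h₁ ∈ Γ.pos) (hh₂ : h₂ ∈ Γ.pos)
    (hgcd : Γ.IsRightGcd d h₁ h₂) (h1 : h₁ * w ∈ Γ.pos) (h2 : h₂ * w ∈ Γ.pos) :
    d * w ∈ Γ.pos := by
  obtain ⟨α, hα, β, hβ, hw⟩ := Γ.fractions' w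
  obtain ⟨m, hm, hαm, hβm, hmin⟩ := Γ.lcm_left α hα β hβ
  have hm1 : (h₁ * β) * m⁻¹ ∈ Γ.pos := by
    refine hmin (h₁ * β) (Γ.pos.mul_mem hh₁ hβ) ?_ ?_
    · have e : (h₁ * β) * α⁻¹ = h₁ * w := by rw [hw]; group
      rw [e]; exact h1
    · have e : (h₁ * β) * β⁻¹ = h₁ := by group
      rw [e]; exact hh₁
  have hm2 : (h₂ * β) * m⁻¹ ∈ Γ.pos := by
    refine hmin (h₂ * β) (Γ.pos.mul_mem hh₂ hβ) ?_ ?_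
    · have e : (h₂ * β) * α⁻¹ = h₂ * w := by rw [hw]; group
      rw [e]; exact h2
    · have e : (h₂ * β) * β⁻¹ = h₂ := by group
      rw [e]; exact hh₂
  set ε := m * β⁻¹ with hε
  have hεd : Γ.RightDvd d ε := by
    refine hgcd.2.2.2 ε hβm ?_ ?_
    · show h₁ * ε⁻¹ ∈ Γ.pos
      have e : h₁ * ε⁻¹ = (h₁ * β) * m⁻¹ := by rw [hε]; group
      rw [e]; exact hm1
    · show h₂ * ε⁻¹ ∈ Γ.pos
      have e : h₂ * ε⁻¹ = (h₂ * β) * m⁻¹ := by rw [hε]; group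
      rw [e]; exact hm2
  have e : d * w = (d * ε⁻¹) * (m * α⁻¹) := by rw [hw, hε]; group
  rw [e]
  exact Γ.pos.mul_mem hεd hαm

lemma isLeftGcd_conj (k : ℤ) {d x y : G} (hgcd : Γ.IsLeftGcd d x y) :
    Γ.IsLeftGcd (Γ.Δ^k * d * Γ.Δ^(-k)) (Γ.Δ^k * x * Γ.Δ^(-k)) (Γ.Δ^k * y * Γ.Δ^(-k)) := by
  obtain ⟨hd, hdx, hdy, hmin⟩ := hgcd
  refine ⟨Γ.zpow_conj_mem k d hd, ?_, ?_, ?_⟩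
  · show (Γ.Δ^k * d * Γ.Δ^(-k))⁻¹ * (Γ.Δ^k * x * Γ.Δ^(-k)) ∈ Γ.pos
    have e : (Γ.Δ^k * d * Γ.Δ^(-k))⁻¹ * (Γ.Δ^k * x * Γ.Δ^(-k)) = Γ.Δ^k * (d⁻¹ * x) * Γ.Δ^(-k) := by
      group
    rw [e]; exact Γ.zpow_conj_mem k _ hdx
  · show (Γ.Δ^k * d * Γ.Δ^(-k))⁻¹ * (Γ.Δ^k * y * Γ.Δ^(-k)) ∈ Γ.pos
    have e : (Γ.Δ^k * d * Γ.Δ^(-k))⁻¹ * (Γ.Δ^k * y * Γ.Δ^(-k)) = Γ.Δ^k * (d⁻¹ * y) * Γ.Δ^(-k) := by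
      group
    rw [e]; exact Γ.zpow_conj_mem k _ hdy
  · intro c hc hcx hcy
    have hc' : Γ.Δ^(-k) * c * Γ.Δ^k ∈ Γ.pos := by
      have := Γ.zpow_conj_mem (-k) c hc
      simpa using this
    have h1 : Γ.LeftDvd (Γ.Δ^(-k) * c * Γ.Δ^k) x := by
      show (Γ.Δ^(-k) * c * Γ.Δ^k)⁻¹ * x ∈ Γ.pos
      have hcx' : c⁻¹ * (Γ.Δ^k * x * Γ.Δ^(-k)) ∈ Γ.pos := hcx
      have := Γ.zpow_conj_mem (-k) _ hcx'
      have e : Γ.Δ^(-k) * (c⁻¹ * (Γ.Δ^k * x * Γ.Δ^(-k))) * Γ.Δ^(-(-k)) =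
          (Γ.Δ^(-k) * c * Γ.Δ^k)⁻¹ * x := by group
      rwa [e] at this
    have h2 : Γ.LeftDvd (Γ.Δ^(-k) * c * Γ.Δ^k) y := by
      show (Γ.Δ^(-k) * c * Γ.Δ^k)⁻¹ * y ∈ Γ.pos
      have hcy' : c⁻¹ * (Γ.Δ^k * y * Γ.Δ^(-k)) ∈ Γ.pos := hcy
      have := Γ.zpow_conj_mem (-k) _ hcy'
      have e : Γ.Δ^(-k) * (c⁻¹ * (Γ.Δ^k * y * Γ.Δ^(-k))) * Γ.Δ^(-(-k)) =
          (Γ.Δ^(-k) * c * Γ.Δ^k)⁻¹ * y := by group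
      rwa [e] at this
    have hd' := hmin _ hc' h1 h2
    show c⁻¹ * (Γ.Δ^k * d * Γ.Δ^(-k)) ∈ Γ.pos
    have hd'' : (Γ.Δ^(-k) * c * Γ.Δ^k)⁻¹ * d ∈ Γ.pos := hd'
    have := Γ.zpow_conj_mem k _ hd''
    have e : Γ.Δ^k * ((Γ.Δ^(-k) * c * Γ.Δ^k)⁻¹ * d) * Γ.Δ^(-k) =
        c⁻¹ * (Γ.Δ^k * d * Γ.Δ^(-k)) := by group
    rwa [e] at this

lemma isRightGcd_conj (k : ℤ) {d x y : G} (hgcd : Γ.IsRightGcd d x y) :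
    Γ.IsRightGcd (Γ.Δ^k * d * Γ.Δ^(-k)) (Γ.Δ^k * x * Γ.Δ^(-k)) (Γ.Δ^k * y * Γ.Δ^(-k)) := by
  obtain ⟨hd, hdx, hdy, hmin⟩ := hgcd
  refine ⟨Γ.zpow_conj_mem k d hd, ?_, ?_, ?_⟩
  · show (Γ.Δ^k * x * Γ.Δ^(-k)) * (Γ.Δ^k * d * Γ.Δ^(-k))⁻¹ ∈ Γ.pos
    have e : (Γ.Δ^k * x * Γ.Δ^(-k)) * (Γ.Δ^k * d * Γ.Δ^(-k))⁻¹ = Γ.Δ^k * (x * d⁻¹) * Γ.Δ^(-k) := by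
      group
    rw [e]; exact Γ.zpow_conj_mem k _ hdx
  · show (Γ.Δ^k * y * Γ.Δ^(-k)) * (Γ.Δ^k * d * Γ.Δ^(-k))⁻¹ ∈ Γ.pos
    have e : (Γ.Δ^k * y * Γ.Δ^(-k)) * (Γ.Δ^k * d * Γ.Δ^(-k))⁻¹ = Γ.Δ^k * (y * d⁻¹) * Γ.Δ^(-k) := by
      group
    rw [e]; exact Γ.zpow_conj_mem k _ hdy
  · intro c hc hcx hcy
    have hc' : Γ.Δ^(-k) * c * Γ.Δ^k ∈ Γ.pos := by
      have := Γ.zpow_conj_mem (-k) c hc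
      simpa using this
    have h1 : Γ.RightDvd x (Γ.Δ^(-k) * c * Γ.Δ^k) := by
      show x * (Γ.Δ^(-k) * c * Γ.Δ^k)⁻¹ ∈ Γ.pos
      have hcx' : (Γ.Δ^k * x * Γ.Δ^(-k)) * c⁻¹ ∈ Γ.pos := hcx
      have := Γ.zpow_conj_mem (-k) _ hcx'
      have e : Γ.Δ^(-k) * ((Γ.Δ^k * x * Γ.Δ^(-k)) * c⁻¹) * Γ.Δ^(-(-k)) =
          x * (Γ.Δ^(-k) * c * Γ.Δ^k)⁻¹ := by group
      rwa [e] at this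
    have h2 : Γ.RightDvd y (Γ.Δ^(-k) * c * Γ.Δ^k) := by
      show y * (Γ.Δ^(-k) * c * Γ.Δ^k)⁻¹ ∈ Γ.pos
      have hcy' : (Γ.Δ^k * y * Γ.Δ^(-k)) * c⁻¹ ∈ Γ.pos := hcy
      have := Γ.zpow_conj_mem (-k) _ hcy'
      have e : Γ.Δ^(-k) * ((Γ.Δ^k * y * Γ.Δ^(-k)) * c⁻¹) * Γ.Δ^(-(-k)) =
          y * (Γ.Δ^(-k) * c * Γ.Δ^k)⁻¹ := by group
      rwa [e] at this
    have hd' := hmin _ hc' h1 h2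
    show (Γ.Δ^k * d * Γ.Δ^(-k)) * c⁻¹ ∈ Γ.pos
    have hd'' : d * (Γ.Δ^(-k) * c * Γ.Δ^k)⁻¹ ∈ Γ.pos := hd'
    have := Γ.zpow_conj_mem k _ hd''
    have e : Γ.Δ^k * (d * (Γ.Δ^(-k) * c * Γ.Δ^k)⁻¹) * Γ.Δ^(-k) =
        (Γ.Δ^k * d * Γ.Δ^(-k)) * c⁻¹ := by group
    rwa [e] at this

lemma cond_gcd (u : G) (k : ℤ) {x y d : G} (hx : x ∈ Γ.pos) (hy : y ∈ Γ.pos)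
    (hgcd : Γ.IsLeftGcd d x y)
    (h1 : x⁻¹ * u * (Γ.Δ^k * x * Γ.Δ^(-k)) ∈ Γ.pos)
    (h2 : y⁻¹ * u * (Γ.Δ^k * y * Γ.Δ^(-k)) ∈ Γ.pos) :
    d⁻¹ * u * (Γ.Δ^k * d * Γ.Δ^(-k)) ∈ Γ.pos := by
  have hdx : d⁻¹ * x ∈ Γ.pos := hgcd.2.1
  have hdy : d⁻¹ * y ∈ Γ.pos := hgcd.2.2.1
  have h1' : (d⁻¹ * u) * (Γ.Δ^k * x * Γ.Δ^(-k)) ∈ Γ.pos := by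
    have e : (d⁻¹ * u) * (Γ.Δ^k * x * Γ.Δ^(-k)) =
        (d⁻¹ * x) * (x⁻¹ * u * (Γ.Δ^k * x * Γ.Δ^(-k))) := by group
    rw [e]; exact Γ.pos.mul_mem hdx h1
  have h2' : (d⁻¹ * u) * (Γ.Δ^k * y * Γ.Δ^(-k)) ∈ Γ.pos := by
    have e : (d⁻¹ * u) * (Γ.Δ^k * y * Γ.Δ^(-k)) =
        (d⁻¹ * y) * (y⁻¹ * u * (Γ.Δ^k * y * Γ.Δ^(-k))) := by group
    rw [e]; exact Γ.pos.mul_mem hdy h2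
  have := Γ.leftGcd_cond (d⁻¹ * u) (Γ.zpow_conj_mem k x hx) (Γ.zpow_conj_mem k y hy)
    (Γ.isLeftGcd_conj k hgcd) h1' h2'
  have e : (d⁻¹ * u) * (Γ.Δ^k * d * Γ.Δ^(-k)) = d⁻¹ * u * (Γ.Δ^k * d * Γ.Δ^(-k)) := by group
  rwa [e] at this

lemma cond_gcd' (u : G) (k : ℤ) {x y d : G} (hx : x ∈ Γ.pos) (hy : y ∈ Γ.pos)
    (hgcd : Γ.IsRightGcd d x y)
    (h1 : x * u * (Γ.Δ^k * x * Γ.Δ^(-k))⁻¹ ∈ Γ.pos)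
    (h2 : y * u * (Γ.Δ^k * y * Γ.Δ^(-k))⁻¹ ∈ Γ.pos) :
    d * u * (Γ.Δ^k * d * Γ.Δ^(-k))⁻¹ ∈ Γ.pos := by
  have hdx : x * d⁻¹ ∈ Γ.pos := hgcd.2.1
  have hdy : y * d⁻¹ ∈ Γ.pos := hgcd.2.2.1
  have h1' : x * (u * (Γ.Δ^k * d * Γ.Δ^(-k))⁻¹) ∈ Γ.pos := by
    have e : x * (u * (Γ.Δ^k * d * Γ.Δ^(-k))⁻¹) =
        (x * u * (Γ.Δ^k * x * Γ.Δ^(-k))⁻¹) * (Γ.Δ^k * (x * d⁻¹) * Γ.Δ^(-k)) := by group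
    rw [e]; exact Γ.pos.mul_mem h1 (Γ.zpow_conj_mem k _ hdx)
  have h2' : y * (u * (Γ.Δ^k * d * Γ.Δ^(-k))⁻¹) ∈ Γ.pos := by
    have e : y * (u * (Γ.Δ^k * d * Γ.Δ^(-k))⁻¹) =
        (y * u * (Γ.Δ^k * y * Γ.Δ^(-k))⁻¹) * (Γ.Δ^k * (y * d⁻¹) * Γ.Δ^(-k)) := by group
    rw [e]; exact Γ.pos.mul_mem h2 (Γ.zpow_conj_mem k _ hdy)
  have := Γ.rightGcd_cond (u * (Γ.Δ^k * d * Γ.Δ^(-k))⁻¹) hx hy hgcd h1' h2'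
  have e : d * (u * (Γ.Δ^k * d * Γ.Δ^(-k))⁻¹) = d * u * (Γ.Δ^k * d * Γ.Δ^(-k))⁻¹ := by group
  rwa [e] at this

lemma inInterval_gcd {r : ℕ} (p q : Fin r → ℤ) (v : Fin r → G) {x y d : G}
    (hx : x ∈ Γ.pos) (hy : y ∈ Γ.pos) (hgcd : Γ.IsLeftGcd d x y)
    (hxI : Γ.InInterval p q (fun i => x⁻¹ * v i * x))
    (hyI : Γ.InInterval p q (fun i => y⁻¹ * v i * y)) :
    Γ.InInterval p q (fun i => d⁻¹ * v i * d) := by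
  intro i
  constructor
  · -- inf condition
    have hA : ∀ z : G, Γ.LeftDvd (Γ.Δ ^ (p i)) (z⁻¹ * v i * z) ↔
        z⁻¹ * (v i * Γ.Δ^(-(p i))) * (Γ.Δ^(p i) * z * Γ.Δ^(-(p i))) ∈ Γ.pos := by
      intro z
      unfold LeftDvd
      constructor
      · intro h
        have := Γ.zpow_conj_mem (p i) _ h
        have e : Γ.Δ^(p i) * ((Γ.Δ ^ (p i))⁻¹ * (z⁻¹ * v i * z)) * Γ.Δ^(-(p i)) =
            z⁻¹ * (v i * Γ.Δ^(-(p i))) * (Γ.Δ^(p i) * z * Γ.Δ^(-(p i))) := by group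
        rwa [e] at this
      · intro h
        have := Γ.zpow_conj_mem (-(p i)) _ h
        have e : Γ.Δ^(-(p i)) * (z⁻¹ * (v i * Γ.Δ^(-(p i))) * (Γ.Δ^(p i) * z * Γ.Δ^(-(p i)))) *
            Γ.Δ^(-(-(p i))) = (Γ.Δ ^ (p i))⁻¹ * (z⁻¹ * v i * z) := by group
        rwa [e] at this
    rw [hA d]
    exact Γ.cond_gcd (v i * Γ.Δ^(-(p i))) (p i) hx hy hgcd ((hA x).mp (hxI i).1) ((hA y).mp (hyI i).1)
  · -- sup condition
    have hB : ∀ z : G, Γ.LeftDvd (z⁻¹ * v i * z) (Γ.Δ ^ (q i)) ↔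
        z⁻¹ * ((v i)⁻¹ * Γ.Δ^(q i)) * (Γ.Δ^(-(q i)) * z * Γ.Δ^(-(-(q i)))) ∈ Γ.pos := by
      intro z
      unfold LeftDvd
      constructor
      · intro h
        have e : (z⁻¹ * v i * z)⁻¹ * Γ.Δ ^ (q i) =
            z⁻¹ * ((v i)⁻¹ * Γ.Δ^(q i)) * (Γ.Δ^(-(q i)) * z * Γ.Δ^(-(-(q i)))) := by group
        rwa [e] at h
      · intro h
        have e : z⁻¹ * ((v i)⁻¹ * Γ.Δ^(q i)) * (Γ.Δ^(-(q i)) * z * Γ.Δ^(-(-(q i)))) =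
            (z⁻¹ * v i * z)⁻¹ * Γ.Δ ^ (q i) := by group
        rwa [e] at h
    rw [hB d]
    exact Γ.cond_gcd ((v i)⁻¹ * Γ.Δ^(q i)) (-(q i)) hx hy hgcd
      ((hB x).mp (hxI i).2) ((hB y).mp (hyI i).2)

lemma inInterval_gcd' {r : ℕ} (p q : Fin r → ℤ) (v : Fin r → G) {x y d : G}
    (hx : x ∈ Γ.pos) (hy : y ∈ Γ.pos) (hgcd : Γ.IsRightGcd d x y)
    (hxI : Γ.InInterval p q (fun i => x * v i * x⁻¹))
    (hyI : Γ.InInterval p q (fun i => y * v i * y⁻¹)) :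
    Γ.InInterval p q (fun i => d * v i * d⁻¹) := by
  intro i
  constructor
  · have hA : ∀ z : G, Γ.LeftDvd (Γ.Δ ^ (p i)) (z * v i * z⁻¹) ↔
        z * (v i * Γ.Δ^(-(p i))) * (Γ.Δ^(p i) * z * Γ.Δ^(-(p i)))⁻¹ ∈ Γ.pos := by
      intro z
      unfold LeftDvd
      constructor
      · intro h
        have := Γ.zpow_conj_mem (p i) _ h
        have e : Γ.Δ^(p i) * ((Γ.Δ ^ (p i))⁻¹ * (z * v i * z⁻¹)) * Γ.Δ^(-(p i)) =
            z * (v i * Γ.Δ^(-(p i))) * (Γ.Δ^(p i) * z * Γ.Δ^(-(p i)))⁻¹ := by group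
        rwa [e] at this
      · intro h
        have := Γ.zpow_conj_mem (-(p i)) _ h
        have e : Γ.Δ^(-(p i)) * (z * (v i * Γ.Δ^(-(p i))) * (Γ.Δ^(p i) * z * Γ.Δ^(-(p i)))⁻¹) *
            Γ.Δ^(-(-(p i))) = (Γ.Δ ^ (p i))⁻¹ * (z * v i * z⁻¹) := by group
        rwa [e] at this
    rw [hA d]
    exact Γ.cond_gcd' (v i * Γ.Δ^(-(p i))) (p i) hx hy hgcd ((hA x).mp (hxI i).1) ((hA y).mp (hyI i).1)
  · have hB : ∀ z : G, Γ.LeftDvd (z * v i * z⁻¹) (Γ.Δ ^ (q i)) ↔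
        z * ((v i)⁻¹ * Γ.Δ^(q i)) * (Γ.Δ^(-(q i)) * z * Γ.Δ^(-(-(q i))))⁻¹ ∈ Γ.pos := by
      intro z
      unfold LeftDvd
      constructor
      · intro h
        have e : (z * v i * z⁻¹)⁻¹ * Γ.Δ ^ (q i) =
            z * ((v i)⁻¹ * Γ.Δ^(q i)) * (Γ.Δ^(-(q i)) * z * Γ.Δ^(-(-(q i))))⁻¹ := by group
        rwa [e] at h
      · intro h
        have e : z * ((v i)⁻¹ * Γ.Δ^(q i)) * (Γ.Δ^(-(q i)) * z * Γ.Δ^(-(-(q i))))⁻¹ =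
            (z * v i * z⁻¹)⁻¹ * Γ.Δ ^ (q i) := by group
        rwa [e] at h
    rw [hB d]
    exact Γ.cond_gcd' ((v i)⁻¹ * Γ.Δ^(q i)) (-(q i)) hx hy hgcd
      ((hB x).mp (hxI i).2) ((hB y).mp (hyI i).2)

lemma inInterval_tau {r : ℕ} (p q : Fin r → ℤ) (v : Fin r → G) (hv : Γ.InInterval p q v) :
    Γ.InInterval p q (fun i => Γ.Δ⁻¹ * v i * Γ.Δ) := by
  intro i
  constructor
  · show (Γ.Δ ^ (p i))⁻¹ * (Γ.Δ⁻¹ * v i * Γ.Δ) ∈ Γ.pos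
    have h := Γ.tau_mem _ (hv i).1
    have e : Γ.Δ⁻¹ * ((Γ.Δ ^ (p i))⁻¹ * v i) * Γ.Δ = (Γ.Δ ^ (p i))⁻¹ * (Γ.Δ⁻¹ * v i * Γ.Δ) := by
      group
    rwa [e] at h
  · show (Γ.Δ⁻¹ * v i * Γ.Δ)⁻¹ * Γ.Δ ^ (q i) ∈ Γ.pos
    have h := Γ.tau_mem _ (hv i).2
    have e : Γ.Δ⁻¹ * ((v i)⁻¹ * Γ.Δ ^ (q i)) * Γ.Δ = (Γ.Δ⁻¹ * v i * Γ.Δ)⁻¹ * Γ.Δ ^ (q i) := by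
      group
    rwa [e] at h

lemma inInterval_tau_inv {r : ℕ} (p q : Fin r → ℤ) (v : Fin r → G) (hv : Γ.InInterval p q v) :
    Γ.InInterval p q (fun i => Γ.Δ * v i * Γ.Δ⁻¹) := by
  intro i
  constructor
  · show (Γ.Δ ^ (p i))⁻¹ * (Γ.Δ * v i * Γ.Δ⁻¹) ∈ Γ.pos
    have h := Γ.tau_inv_mem _ (hv i).1
    have e : Γ.Δ * ((Γ.Δ ^ (p i))⁻¹ * v i) * Γ.Δ⁻¹ = (Γ.Δ ^ (p i))⁻¹ * (Γ.Δ * v i * Γ.Δ⁻¹) := by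
      group
    rwa [e] at h
  · show (Γ.Δ * v i * Γ.Δ⁻¹)⁻¹ * Γ.Δ ^ (q i) ∈ Γ.pos
    have h := Γ.tau_inv_mem _ (hv i).2
    have e : Γ.Δ * ((v i)⁻¹ * Γ.Δ ^ (q i)) * Γ.Δ⁻¹ = (Γ.Δ * v i * Γ.Δ⁻¹)⁻¹ * Γ.Δ ^ (q i) := by
      group
    rwa [e] at h

lemma exists_central_pow : ∃ e : ℕ, 0 < e ∧ ∀ g : G, Γ.Δ ^ (e:ℤ) * g = g * Γ.Δ ^ (e:ℤ) := by
  classical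
  set S : Set G := {s : G | s ∈ Γ.pos ∧ s⁻¹ * Γ.Δ ∈ Γ.pos} with hS
  set f : G → G := fun g => Γ.Δ⁻¹ * g * Γ.Δ with hf
  have hmaps : Set.MapsTo f S S := by
    intro s hs
    refine ⟨Γ.tau_mem s hs.1, ?_⟩
    have h := Γ.tau_mem _ hs.2
    have e : Γ.Δ⁻¹ * (s⁻¹ * Γ.Δ) * Γ.Δ = (f s)⁻¹ * Γ.Δ := by rw [hf]; group
    rwa [e] at h
  have hinj : Function.Injective f := by
    intro g h hgh
    simp only [hf] at hgh
    exact mul_left_cancel (mul_right_cancel hgh)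
  haveI : Finite ↥S := Γ.simples_finite.to_subtype
  have : ∃ k k' : ℕ, k ≠ k' ∧ (hmaps.iterate k).restrict = (hmaps.iterate k').restrict := by
    obtain ⟨k, k', hne, heq⟩ := Finite.exists_ne_map_eq_of_infinite
      (fun k : ℕ => (hmaps.iterate k).restrict)
    exact ⟨k, k', hne, heq⟩
  obtain ⟨k, k', hne, heq⟩ := this
  -- wlog k < k'
  have key : ∀ (k k' : ℕ), k < k' →
      (hmaps.iterate k).restrict = (hmaps.iterate k').restrict →
      ∃ e : ℕ, 0 < e ∧ ∀ s ∈ S, f^[e] s = s := by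
    intro k k' hlt heq
    refine ⟨k' - k, by omega, ?_⟩
    intro s hs
    have h1 : f^[k] (f^[k' - k] s) = f^[k] s := by
      have h2 : f^[k + (k' - k)] s = f^[k'] s := by congr 1; omega
      rw [Function.iterate_add_apply] at h2
      have h3 := congrFun heq ⟨s, hs⟩
      have h4 : f^[k] s = f^[k'] s := congrArg Subtype.val h3
      rw [h2, ← h4]
    exact Function.Injective.iterate hinj k h1
  have hiter : ∃ e : ℕ, 0 < e ∧ ∀ s ∈ S, f^[e] s = s := by
    rcases lt_or_gt_of_ne hne with h | h
    · exact key k k' h heq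
    · exact key k' k h heq.symm
  obtain ⟨e, he, hfix⟩ := hiter
  have hiter_eq : ∀ (m : ℕ) (g : G), f^[m] g = Γ.Δ ^ (-(m:ℤ)) * g * Γ.Δ ^ (m:ℤ) := by
    intro m
    induction m with
    | zero => intro g; simp
    | succ n ih =>
        intro g
        rw [Function.iterate_succ_apply', ih g, hf]
        push_cast
        group
  have hfix' : ∀ s ∈ S, Γ.Δ ^ (-(e:ℤ)) * s * Γ.Δ ^ (e:ℤ) = s := by
    intro s hs
    rw [← hiter_eq e s]
    exact hfix s hs
  have hpos : ∀ g ∈ Γ.pos, Γ.Δ ^ (-(e:ℤ)) * g * Γ.Δ ^ (e:ℤ) = g := by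
    intro g hg
    rw [← Γ.simples_generate] at hg
    induction hg using Submonoid.closure_induction with
    | mem s hs => exact hfix' s hs
    | one => group
    | mul x y hx hy ihx ihy =>
        have ee : Γ.Δ ^ (-(e:ℤ)) * (x * y) * Γ.Δ ^ (e:ℤ) =
            (Γ.Δ ^ (-(e:ℤ)) * x * Γ.Δ ^ (e:ℤ)) * (Γ.Δ ^ (-(e:ℤ)) * y * Γ.Δ ^ (e:ℤ)) := by group
        rw [ee, ihx, ihy]
  refine ⟨e, he, ?_⟩
  intro g
  obtain ⟨α, hα, β, hβ, hg⟩ := Γ.fractions g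
  have hαe := hpos α hα
  have hβe := hpos β hβ
  have : Γ.Δ ^ (-(e:ℤ)) * g * Γ.Δ ^ (e:ℤ) = g := by
    rw [hg]
    calc Γ.Δ ^ (-(e:ℤ)) * (α⁻¹ * β) * Γ.Δ ^ (e:ℤ)
        = (Γ.Δ ^ (-(e:ℤ)) * α * Γ.Δ ^ (e:ℤ))⁻¹ * (Γ.Δ ^ (-(e:ℤ)) * β * Γ.Δ ^ (e:ℤ)) := by group
      _ = α⁻¹ * β := by rw [hαe, hβe]
  calc Γ.Δ ^ (e:ℤ) * g = Γ.Δ ^ (e:ℤ) * (Γ.Δ ^ (-(e:ℤ)) * g * Γ.Δ ^ (e:ℤ)) := by rw [this]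
    _ = g * Γ.Δ ^ (e:ℤ) := by group

section Chains

variable {r : ℕ}

/-- a chain of `R`-steps from `u` to `v` -/
def ChainFrom (R : (Fin r → G) → (Fin r → G) → Prop) (u v : Fin r → G) : Prop :=
  ∃ (l : ℕ) (w : Fin (l + 1) → Fin r → G), w 0 = u ∧ w (Fin.last l) = v ∧
    ∀ i : Fin l, R (w i.castSucc) (w i.succ)

lemma chainFrom_refl (R : (Fin r → G) → (Fin r → G) → Prop) (u : Fin r → G) :
    ChainFrom R u u :=
  ⟨0, fun _ => u, rfl, rfl, fun i => i.elim0⟩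

lemma chainFrom_cons {R : (Fin r → G) → (Fin r → G) → Prop} {u v z : Fin r → G}
    (h : R u v) (hc : ChainFrom R v z) : ChainFrom R u z := by
  obtain ⟨l, w, h0, hl, hstep⟩ := hc
  refine ⟨l + 1, Fin.cases u w, by simp, ?_, ?_⟩
  · simp only [← Fin.succ_last, Fin.cases_succ]
    exact hl
  · intro i
    induction i using Fin.cases with
    | zero =>
        have e2 : (0 : Fin (l+1)).succ = Fin.succ 0 := rfl
        simp only [Fin.castSucc_zero, Fin.cases_zero, e2, Fin.cases_succ, h0]
        exact h
    | succ j =>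
        have e1 : (j.succ).castSucc = Fin.succ j.castSucc := (Fin.succ_castSucc j).symm
        simp only [e1, Fin.cases_succ]
        exact hstep j

lemma conj_of_steps :
    ∀ (l : ℕ) (w : Fin (l + 1) → Fin r → G),
      (∀ i : Fin l, ∃ s : G, ∀ j, w i.succ j = s⁻¹ * w i.castSucc j * s) →
      ∃ x : G, ∀ j, w (Fin.last l) j = x⁻¹ * w 0 j * x := by
  intro l
  induction l with
  | zero =>
      intro w _
      exact ⟨1, fun j => by simp⟩
  | succ n ih =>
      intro w hstep
      have hstep' : ∀ i : Fin n, ∃ s : G,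
          ∀ j, (w ∘ Fin.succ) i.succ j = s⁻¹ * (w ∘ Fin.succ) i.castSucc j * s := by
        intro i
        obtain ⟨s, hs⟩ := hstep i.succ
        refine ⟨s, fun j => ?_⟩
        have e1 : (w ∘ Fin.succ) i.succ j = w (i.succ).succ j := rfl
        have e2 : (w ∘ Fin.succ) i.castSucc j = w (i.succ).castSucc j := by
          rw [Function.comp_apply, Fin.succ_castSucc]
        rw [e1, e2]
        exact hs j
      obtain ⟨x', hx'⟩ := ih (w ∘ Fin.succ) hstep'
      obtain ⟨s, hs⟩ := hstep 0
      refine ⟨s * x', ?_⟩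
      intro j
      have e1 : w (Fin.last (n+1)) j = (w ∘ Fin.succ) (Fin.last n) j := by
        rw [Function.comp_apply, Fin.succ_last]
      rw [e1, hx' j]
      have e2 : (w ∘ Fin.succ) 0 j = s⁻¹ * w 0 j * s := by
        rw [Function.comp_apply]
        have := hs j
        rwa [Fin.castSucc_zero] at this
      rw [e2]
      group

end Chains

section Main

variable {r : ℕ}

/-- the step relation for right conjugation chains -/
def StepR (Γ : GarsideStructure G) (p q : Fin r → ℤ) (u u' : Fin r → G) : Prop :=
  (∃ s ∈ Γ.SRight p q u, ∀ j, u' j = s⁻¹ * u j * s) ∧ Γ.InInterval p q u'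

/-- the step relation for left conjugation chains -/
def StepL (Γ : GarsideStructure G) (p q : Fin r → ℤ) (u u' : Fin r → G) : Prop :=
  (∃ s ∈ Γ.SLeft p q u, ∀ j, u' j = s * u j * s⁻¹) ∧ Γ.InInterval p q u'

lemma chain_construct_right (p q : Fin r → ℤ) :
    ∀ (n : ℕ) (y : G), y ∈ Γ.pos → Γ.nlen y ≤ n → ∀ v : Fin r → G,
      Γ.InInterval p q v → Γ.InInterval p q (fun i => y⁻¹ * v i * y) →
      ChainFrom (Γ.StepR p q) v (fun i => y⁻¹ * v i * y) := by
  intro n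
  induction n with
  | zero =>
      intro y hy hn v hv hvy
      have hy1 : y = 1 := by
        by_contra hne
        have h1 : 1 ∈ Γ.lenSet y := ⟨[y], by simp [hy, hne], by simp, rfl⟩
        have := Γ.le_nlen hy h1
        omega
      have e : (fun i => y⁻¹ * v i * y) = v := by funext i; rw [hy1]; group
      rw [e]
      exact chainFrom_refl _ v
  | succ n ih =>
      intro y hy hn v hv hvy
      by_cases hy1 : y = 1
      · have e : (fun i => y⁻¹ * v i * y) = v := by funext i; rw [hy1]; group
        rw [e]
        exact chainFrom_refl _ v
      -- the gcd of y and Δ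
      obtain ⟨d, hgcd⟩ := Γ.exists_leftGcd hy Γ.delta_mem
      have hd : d ∈ Γ.pos := hgcd.1
      have hdy : Γ.LeftDvd d y := hgcd.2.1
      have hdΔ : Γ.LeftDvd d Γ.Δ := hgcd.2.2.1
      have hdne : d ≠ 1 := by
        obtain ⟨s, hs, hs1, hsy⟩ := Γ.exists_simple_left_divisor hy hy1
        have hsd : Γ.LeftDvd s d := hgcd.2.2.2 s hs.1 hsy hs.2
        intro hd1
        apply hs1
        refine Γ.eq_one_of_mem_inv_mem hs.1 ?_
        have : s⁻¹ * d ∈ Γ.pos := hsd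
        rwa [hd1, mul_one] at this
      -- v^d is in the interval
      have hvd : Γ.InInterval p q (fun i => d⁻¹ * v i * d) :=
        Γ.inInterval_gcd p q v hy Γ.delta_mem hgcd hvy
          (by
            have := Γ.inInterval_tau p q v hv
            have e : (fun i => Γ.Δ⁻¹ * v i * Γ.Δ) = (fun i => Γ.Δ⁻¹ * v i * Γ.Δ) := rfl
            exact this)
      -- pick a minimal element
      set M : Set G := {t | t ∈ Γ.pos ∧ t ≠ 1 ∧ Γ.LeftDvd t d ∧
        Γ.InInterval p q (fun i => t⁻¹ * v i * t)} with hM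
      have hdM : d ∈ M := ⟨hd, hdne, Γ.leftDvd_refl d, hvd⟩
      set N : Set ℕ := Γ.nlen '' M with hN
      have hNne : N.Nonempty := ⟨Γ.nlen d, d, hdM, rfl⟩
      obtain ⟨t, htM, htval⟩ := Nat.sInf_mem hNne
      have ht : t ∈ Γ.pos := htM.1
      have ht1 : t ≠ 1 := htM.2.1
      have htd : Γ.LeftDvd t d := htM.2.2.1
      have htI : Γ.InInterval p q (fun i => t⁻¹ * v i * t) := htM.2.2.2
      -- t is in SRight
      have htS : t ∈ Γ.SRight p q v := by
        refine ⟨⟨⟨ht, Γ.leftDvd_trans htd hdΔ⟩, ht1, htI⟩, ?_⟩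
        rintro t' ⟨ht's, ht'1, ht'I⟩ ht't
        have ht'M : t' ∈ M := ⟨ht's.1, ht'1, Γ.leftDvd_trans ht't htd, ht'I⟩
        have h1 : Γ.nlen t ≤ Γ.nlen t' := htval ▸ Nat.sInf_le ⟨t', ht'M, rfl⟩
        by_contra hne
        exact absurd h1 (not_le.mpr (Γ.nlen_lt_left ht's.1 ht ht't hne))
      -- recurse
      set y' := t⁻¹ * y with hy'
      have hty : Γ.LeftDvd t y := Γ.leftDvd_trans htd hdy
      have hy'pos : y' ∈ Γ.pos := hty
      have hy'lt : Γ.nlen y' < Γ.nlen y := by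
        refine Γ.nlen_lt_right hy'pos hy ?_ ?_
        · show y * y'⁻¹ ∈ Γ.pos
          have e : y * y'⁻¹ = t := by rw [hy']; group
          rw [e]; exact ht
        · intro hcon
          apply ht1
          rw [hy'] at hcon
          have h2 : t⁻¹ * y = 1 * y := by rw [one_mul]; exact hcon
          have h3 : t⁻¹ = 1 := mul_right_cancel h2
          rwa [inv_eq_one] at h3
      set v' : Fin r → G := fun i => t⁻¹ * v i * t with hv'
      have hv'y' : Γ.InInterval p q (fun i => y'⁻¹ * v' i * y') := by
        have e : (fun i => y'⁻¹ * v' i * y') = (fun i => y⁻¹ * v i * y) := by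
          funext i; rw [hy', hv']; group
        rw [e]; exact hvy
      have hchain := ih y' hy'pos (by omega) v' htI hv'y'
      have e : (fun i => y'⁻¹ * v' i * y') = (fun i => y⁻¹ * v i * y) := by
        funext i; rw [hy', hv']; group
      rw [e] at hchain
      exact chainFrom_cons ⟨⟨t, htS, fun j => rfl⟩, htI⟩ hchain

lemma chain_construct_left (p q : Fin r → ℤ) :
    ∀ (n : ℕ) (y : G), y ∈ Γ.pos → Γ.nlen y ≤ n → ∀ v : Fin r → G,
      Γ.InInterval p q v → Γ.InInterval p q (fun i => y * v i * y⁻¹) →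
      ChainFrom (Γ.StepL p q) v (fun i => y * v i * y⁻¹) := by
  intro n
  induction n with
  | zero =>
      intro y hy hn v hv hvy
      have hy1 : y = 1 := by
        by_contra hne
        have h1 : 1 ∈ Γ.lenSet y := ⟨[y], by simp [hy, hne], by simp, rfl⟩
        have := Γ.le_nlen hy h1
        omega
      have e : (fun i => y * v i * y⁻¹) = v := by funext i; rw [hy1]; group
      rw [e]
      exact chainFrom_refl _ v
  | succ n ih =>
      intro y hy hn v hv hvy
      by_cases hy1 : y = 1
      · have e : (fun i => y * v i * y⁻¹) = v := by funext i; rw [hy1]; group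
        rw [e]
        exact chainFrom_refl _ v
      obtain ⟨d, hgcd⟩ := Γ.exists_rightGcd hy Γ.delta_mem
      have hd : d ∈ Γ.pos := hgcd.1
      have hdy : Γ.RightDvd y d := hgcd.2.1
      have hdΔ : Γ.RightDvd Γ.Δ d := hgcd.2.2.1
      have hdΔ' : Γ.LeftDvd d Γ.Δ := (Γ.balanced d hd).mpr hdΔ
      have hdne : d ≠ 1 := by
        obtain ⟨s, hs, hs1, hsy⟩ := Γ.exists_simple_right_divisor hy hy1
        have hsΔ : Γ.RightDvd Γ.Δ s := (Γ.balanced s hs.1).mp hs.2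
        have hsd : Γ.RightDvd d s := hgcd.2.2.2 s hs.1 hsy hsΔ
        intro hd1
        apply hs1
        refine Γ.eq_one_of_mem_inv_mem hs.1 ?_
        have h2 : d * s⁻¹ ∈ Γ.pos := hsd
        rwa [hd1, one_mul] at h2
      have hvd : Γ.InInterval p q (fun i => d * v i * d⁻¹) :=
        Γ.inInterval_gcd' p q v hy Γ.delta_mem hgcd hvy (Γ.inInterval_tau_inv p q v hv)
      set M : Set G := {t | t ∈ Γ.pos ∧ t ≠ 1 ∧ Γ.RightDvd d t ∧
        Γ.InInterval p q (fun i => t * v i * t⁻¹)} with hM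
      have hdM : d ∈ M := ⟨hd, hdne, by simpa [RightDvd] using Γ.pos.one_mem, hvd⟩
      set N : Set ℕ := Γ.nlen '' M with hN
      have hNne : N.Nonempty := ⟨Γ.nlen d, d, hdM, rfl⟩
      obtain ⟨t, htM, htval⟩ := Nat.sInf_mem hNne
      have ht : t ∈ Γ.pos := htM.1
      have ht1 : t ≠ 1 := htM.2.1
      have htd : Γ.RightDvd d t := htM.2.2.1
      have htI : Γ.InInterval p q (fun i => t * v i * t⁻¹) := htM.2.2.2
      have htS : t ∈ Γ.SLeft p q v := by
        refine ⟨⟨⟨ht, (Γ.balanced t ht).mpr (Γ.rightDvd_trans hdΔ htd)⟩, ht1, htI⟩, ?_⟩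
        rintro t' ⟨ht's, ht'1, ht'I⟩ htt'
        have ht'M : t' ∈ M := ⟨ht's.1, ht'1, Γ.rightDvd_trans htd htt', ht'I⟩
        have h1 : Γ.nlen t ≤ Γ.nlen t' := htval ▸ Nat.sInf_le ⟨t', ht'M, rfl⟩
        by_contra hne
        exact absurd h1 (not_le.mpr (Γ.nlen_lt_right ht's.1 ht htt' hne))
      set y' := y * t⁻¹ with hy'
      have hty : Γ.RightDvd y t := Γ.rightDvd_trans hdy htd
      have hy'pos : y' ∈ Γ.pos := hty
      have hy'lt : Γ.nlen y' < Γ.nlen y := by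
        refine Γ.nlen_lt_left hy'pos hy ?_ ?_
        · show y'⁻¹ * y ∈ Γ.pos
          have e : y'⁻¹ * y = t := by rw [hy']; group
          rw [e]; exact ht
        · intro hcon
          apply ht1
          rw [hy'] at hcon
          have h2 : y * t⁻¹ = y * 1 := by rw [mul_one]; exact hcon
          have h3 : t⁻¹ = 1 := mul_left_cancel h2
          rwa [inv_eq_one] at h3
      set v' : Fin r → G := fun i => t * v i * t⁻¹ with hv'
      have hv'y' : Γ.InInterval p q (fun i => y' * v' i * y'⁻¹) := by
        have e : (fun i => y' * v' i * y'⁻¹) = (fun i => y * v i * y⁻¹) := by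
          funext i; rw [hy', hv']; group
        rw [e]; exact hvy
      have hchain := ih y' hy'pos (by omega) v' htI hv'y'
      have e : (fun i => y' * v' i * y'⁻¹) = (fun i => y * v i * y⁻¹) := by
        funext i; rw [hy', hv']; group
      rw [e] at hchain
      exact chainFrom_cons ⟨⟨t, htS, fun j => rfl⟩, htI⟩ hchain

end Main

lemma exists_pos_conjugator (x : G) :
    ∃ y ∈ Γ.pos, ∃ K : ℤ, y = Γ.Δ ^ K * x⁻¹ ∧ ∀ g : G, Γ.Δ ^ K * g = g * Γ.Δ ^ K := by
  obtain ⟨e, he, hcent⟩ := Γ.exists_central_pow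
  obtain ⟨α, hα, β, hβ, hx⟩ := Γ.fractions x⁻¹
  obtain ⟨n, hn⟩ := Γ.exists_leftDvd_delta_pow hα
  set K' : ℕ := e * (n + 1) with hK'
  set K : ℤ := (K' : ℤ) with hK
  have hcentK : ∀ g : G, Γ.Δ ^ K * g = g * Γ.Δ ^ K := by
    intro g
    have he2 : K = (e:ℤ) * ((n+1:ℕ):ℤ) := by rw [hK, hK']; push_cast; ring
    have h1 : Γ.Δ ^ K = (Γ.Δ ^ (e:ℤ)) ^ (n+1 : ℕ) := by
      rw [he2, zpow_mul, zpow_natCast]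
    have h2 : Commute (Γ.Δ ^ (e:ℤ)) g := hcent g
    have h3 := h2.pow_left (n+1)
    rw [h1]
    exact h3
  have hKn : n ≤ K' := by
    have : 1 ≤ e := he
    calc n ≤ n + 1 := by omega
      _ ≤ e * (n + 1) := Nat.le_mul_of_pos_left _ he
  have hαK : Γ.LeftDvd α (Γ.Δ ^ K) := by
    refine Γ.leftDvd_trans hn ?_
    show (Γ.Δ ^ (n:ℤ))⁻¹ * Γ.Δ ^ K ∈ Γ.pos
    have e1 : (Γ.Δ ^ (n:ℤ))⁻¹ * Γ.Δ ^ K = Γ.Δ ^ (K - (n:ℤ)) := by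
      rw [zpow_sub]; group
    rw [e1]
    have e2 : K - (n:ℤ) = ((K' - n : ℕ) : ℤ) := by
      rw [hK]; push_cast; omega
    rw [e2]
    exact Γ.delta_zpow_mem _
  have hmem : Γ.Δ ^ K * x⁻¹ ∈ Γ.pos := by
    have h1 : Γ.Δ ^ K * α⁻¹ ∈ Γ.pos := (Γ.leftDvd_zpow_iff_rightDvd K α).mp hαK
    have e1 : Γ.Δ ^ K * x⁻¹ = (Γ.Δ ^ K * α⁻¹) * β := by rw [hx]; group
    rw [e1]
    exact Γ.pos.mul_mem h1 hβ
  exact ⟨Γ.Δ ^ K * x⁻¹, hmem, K, rfl, hcentK⟩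

end GarsideStructure

theorem conjugate_iff_minimal_simple_chains' {G : Type*} [Group G]
    (Γ : GarsideStructure G) (r : ℕ) (p q : Fin r → ℤ) (a c : Fin r → G)
    (ha : Γ.InInterval p q a) (hc : Γ.InInterval p q c) :
    ((∃ x : G, ∀ i, x⁻¹ * a i * x = c i) ↔
      (∃ (l : ℕ) (w : Fin (l + 1) → Fin r → G),
        w 0 = c ∧ w (Fin.last l) = a ∧ (∀ i, Γ.InInterval p q (w i)) ∧
        ∀ i : Fin l, ∃ s ∈ Γ.SRight p q (w i.castSucc),
          ∀ j, w i.succ j = s⁻¹ * w i.castSucc j * s)) ∧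
    ((∃ x : G, ∀ i, x⁻¹ * a i * x = c i) ↔
      (∃ (l : ℕ) (w : Fin (l + 1) → Fin r → G),
        w 0 = a ∧ w (Fin.last l) = c ∧ (∀ i, Γ.InInterval p q (w i)) ∧
        ∀ i : Fin l, ∃ s ∈ Γ.SLeft p q (w i.castSucc),
          ∀ j, w i.succ j = s * w i.castSucc j * s⁻¹)) := by
  constructor
  · constructor
    · rintro ⟨x, hx⟩
      obtain ⟨y, hy, K, hyK, hcent⟩ := Γ.exists_pos_conjugator x
      have hconj : ∀ i, y⁻¹ * c i * y = a i := by
        intro i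
        rw [hyK]
        have h1 : a i = x * c i * x⁻¹ := by rw [← hx i]; group
        rw [h1]
        have h3 : Γ.Δ^(-K) * c i * Γ.Δ^K = c i := by
          rw [mul_assoc, ← hcent (c i)]
          group
        calc (Γ.Δ^K * x⁻¹)⁻¹ * c i * (Γ.Δ^K * x⁻¹)
            = x * (Γ.Δ^(-K) * c i * Γ.Δ^K) * x⁻¹ := by group
          _ = x * c i * x⁻¹ := by rw [h3]
      have hcy : Γ.InInterval p q (fun i => y⁻¹ * c i * y) := by
        have e : (fun i => y⁻¹ * c i * y) = a := funext hconj
        rw [e]; exact ha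
      have hchain := Γ.chain_construct_right p q (Γ.nlen y) y hy le_rfl c hc hcy
      have e : (fun i => y⁻¹ * c i * y) = a := funext hconj
      rw [e] at hchain
      obtain ⟨l, w, h0, hl, hstep⟩ := hchain
      refine ⟨l, w, h0, hl, ?_, fun i => (hstep i).1⟩
      intro i
      induction i using Fin.cases with
      | zero => rw [h0]; exact hc
      | succ j => exact (hstep j).2
    · rintro ⟨l, w, h0, hl, hI, hstep⟩
      obtain ⟨x0, hx0⟩ := GarsideStructure.conj_of_steps l w
        (fun i => by obtain ⟨s, _, hs⟩ := hstep i; exact ⟨s, hs⟩)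
      refine ⟨x0⁻¹, ?_⟩
      intro i
      have h1 := hx0 i
      rw [hl, h0] at h1
      rw [h1]; group
  · constructor
    · rintro ⟨x, hx⟩
      obtain ⟨y, hy, K, hyK, hcent⟩ := Γ.exists_pos_conjugator x
      have hconj : ∀ i, y * a i * y⁻¹ = c i := by
        intro i
        rw [hyK]
        have h1 : x⁻¹ * a i * x = c i := hx i
        have h3 : Γ.Δ^K * c i * Γ.Δ^(-K) = c i := by
          rw [hcent (c i)]
          group
        calc (Γ.Δ^K * x⁻¹) * a i * (Γ.Δ^K * x⁻¹)⁻¹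
            = Γ.Δ^K * (x⁻¹ * a i * x) * Γ.Δ^(-K) := by group
          _ = Γ.Δ^K * c i * Γ.Δ^(-K) := by rw [h1]
          _ = c i := h3
      have hay : Γ.InInterval p q (fun i => y * a i * y⁻¹) := by
        have e : (fun i => y * a i * y⁻¹) = c := funext hconj
        rw [e]; exact hc
      have hchain := Γ.chain_construct_left p q (Γ.nlen y) y hy le_rfl a ha hay
      have e : (fun i => y * a i * y⁻¹) = c := funext hconj
      rw [e] at hchain
      obtain ⟨l, w, h0, hl, hstep⟩ := hchain
      refine ⟨l, w, h0, hl, ?_, fun i => (hstep i).1⟩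
      intro i
      induction i using Fin.cases with
      | zero => rw [h0]; exact ha
      | succ j => exact (hstep j).2
    · rintro ⟨l, w, h0, hl, hI, hstep⟩
      obtain ⟨x0, hx0⟩ := GarsideStructure.conj_of_steps l w
        (fun i => by
          obtain ⟨s, _, hs⟩ := hstep i
          refine ⟨s⁻¹, fun j => ?_⟩
          rw [hs j]; group)
      refine ⟨x0, ?_⟩
      intro i
      have h1 := hx0 i
      rw [hl, h0] at h1
      exact h1.symm
/-- For `a, c ∈ [p,q]`, the following are equivalent: (1) `a` and `c` are conjugate;
(2) `a` is reachable from `c` inside `[p,q]` by conjugating with minimal simple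
elements (from `SRight`); (3) `c` is reachable from `a` inside `[p,q]` by conjugating
with inverses of minimal simple elements (from `SLeft`). -/
theorem conjugate_iff_minimal_simple_chains {G : Type*} [Group G]
    (Γ : GarsideStructure G) (r : ℕ) (p q : Fin r → ℤ) (a c : Fin r → G)
    (ha : Γ.InInterval p q a) (hc : Γ.InInterval p q c) :
    ((∃ x : G, ∀ i, x⁻¹ * a i * x = c i) ↔
      (∃ (l : ℕ) (w : Fin (l + 1) → Fin r → G),
        w 0 = c ∧ w (Fin.last l) = a ∧ (∀ i, Γ.InInterval p q (w i)) ∧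
        ∀ i : Fin l, ∃ s ∈ Γ.SRight p q (w i.castSucc),
          ∀ j, w i.succ j = s⁻¹ * w i.castSucc j * s)) ∧
    ((∃ x : G, ∀ i, x⁻¹ * a i * x = c i) ↔
      (∃ (l : ℕ) (w : Fin (l + 1) → Fin r → G),
        w 0 = a ∧ w (Fin.last l) = c ∧ (∀ i, Γ.InInterval p q (w i)) ∧
        ∀ i : Fin l, ∃ s ∈ Γ.SLeft p q (w i.castSucc),
          ∀ j, w i.succ j = s * w i.castSucc j * s⁻¹)) := by
  exact conjugate_iff_minimal_simple_chains' Γ r p q a c ha hc
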